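/- For the two-Pauli channel M_{XZ}(μ) = (1/3)μ + (1/3)σ_x μ σ_x + (1/3)σ_z μ σ_z on a single qubit, every pure input state is mapped to a state with eigenvalues (2/3, 1/3); hence the minimum output entropy equals h(1/3), the binary entropy of 1/3. -/

import Mathlib

open Matrix Kronecker BigOperators ComplexOrder

noncomputable section

namespace QI

/-- A density matrix: positive semidefinite with unit trace. -/
def IsDensity {A : Type*} [Fintype A] (ρ : Matrix A A ℂ) : Prop :=
  ρ.PosSemidef ∧ ρ.trace = 1

/-- Von Neumann entropy `S(ρ) = -∑ λᵢ log λᵢ` of (the eigenvalues of) a Hermitian matrix. -/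
def vnEntropy {A : Type*} [Fintype A] [DecidableEq A] (ρ : Matrix A A ℂ) : ℝ :=
  if h : ρ.IsHermitian then -∑ i, (h.eigenvalues i) * Real.log (h.eigenvalues i) else 0

/-- Partial trace over the first tensor factor. -/
def ptraceLeft {A B : Type*} [Fintype A] (σ : Matrix (A × B) (A × B) ℂ) : Matrix B B ℂ :=
  Matrix.of fun i j => ∑ a, σ (a, i) (a, j)

/-- Partial trace over the second tensor factor. -/
def ptraceRight {A B : Type*} [Fintype B] (σ : Matrix (A × B) (A × B) ℂ) : Matrix A A ℂ :=
  Matrix.of fun i j => ∑ b, σ (i, b) (j, b)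

/-- Conditional entropy `S(B|B')_σ = S(σ_{BB'}) - S(σ_{B'})`, where the matrix is
indexed by `B × B'` and the first factor is the conditioned-upon... i.e. traced-out one. -/
def condEntropy {B B' : Type*} [Fintype B] [DecidableEq B] [Fintype B'] [DecidableEq B']
    (σ : Matrix (B × B') (B × B') ℂ) : ℝ :=
  vnEntropy σ - vnEntropy (ptraceLeft σ)

/-- The extension `M ⊗ id_E` of a map on matrices to an ancilla system `E`. -/
def tensorExt {A B E : Type*} (M : Matrix A A ℂ → Matrix B B ℂ)
    (σ : Matrix (A × E) (A × E) ℂ) : Matrix (B × E) (B × E) ℂ :=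
  Matrix.of fun p q => M (Matrix.of fun a a' => σ (a, p.2) (a', q.2)) p.1 q.1

/-- A quantum channel: linear, completely positive (every finite ancilla extension preserves
positive semidefiniteness) and trace preserving. -/
def IsCPTP {A B : Type*} [Fintype A] [Fintype B] (M : Matrix A A ℂ → Matrix B B ℂ) : Prop :=
  (∀ (c : ℂ) (ρ σ : Matrix A A ℂ), M (c • ρ + σ) = c • M ρ + M σ) ∧
  (∀ (k : ℕ) (σ : Matrix (A × Fin k) (A × Fin k) ℂ), σ.PosSemidef →
      (tensorExt M σ).PosSemidef) ∧
  (∀ ρ : Matrix A A ℂ, (M ρ).trace = ρ.trace)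

/-- The rank-one projector `|ψ⟩⟨ψ|`. -/
def pureState {A : Type*} (ψ : A → ℂ) : Matrix A A ℂ :=
  Matrix.of fun a a' => ψ a * star (ψ a')

/-- `ψ` is a unit vector. -/
def IsUnitVec {A : Type*} [Fintype A] (ψ : A → ℂ) : Prop :=
  ∑ a, Complex.normSq (ψ a) = 1

/-- Minimum output entropy of a channel: infimum of `S(M(|ψ⟩⟨ψ|))` over unit vectors `ψ`. -/
def Smin {A B : Type*} [Fintype A] [Fintype B] [DecidableEq B]
    (M : Matrix A A ℂ → Matrix B B ℂ) : ℝ :=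
  sInf {x | ∃ ψ : A → ℂ, IsUnitVec ψ ∧ x = vnEntropy (M (pureState ψ))}

/-- Separability: a convex combination of product states. -/
def IsSeparable {A B : Type*} [Fintype A] [Fintype B]
    (σ : Matrix (A × B) (A × B) ℂ) : Prop :=
  ∃ (k : ℕ) (p : Fin k → ℝ) (α : Fin k → Matrix A A ℂ) (β : Fin k → Matrix B B ℂ),
    (∀ i, 0 ≤ p i) ∧ (∀ i, IsDensity (α i)) ∧ (∀ i, IsDensity (β i)) ∧
    (∑ i, p i = 1) ∧ σ = ∑ i, (p i : ℂ) • (α i ⊗ₖ β i)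

end QI

namespace QI

/-- The spectrum (eigenvalue multiset) of a Hermitian matrix. -/
def spec {n : Type*} [Fintype n] [DecidableEq n] (ρ : Matrix n n ℂ) : Multiset ℝ :=
  if h : ρ.IsHermitian then Finset.univ.val.map h.eigenvalues else 0

end QI

namespace QI

/-- Shannon entropy of a (finitely supported) probability vector. -/
def shannon {ι : Type*} [Fintype ι] (P : ι → ℝ) : ℝ := -∑ k, P k * Real.log (P k)

/-- Binary entropy. -/
def binEnt (p : ℝ) : ℝ := -(p * Real.log p) - (1 - p) * Real.log (1 - p)

end QI

namespace QI

def pauliX : Matrix (Fin 2) (Fin 2) ℂ := !![0, 1; 1, 0]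
def pauliZ : Matrix (Fin 2) (Fin 2) ℂ := !![1, 0; 0, -1]

/-- The two-Pauli channel at `t = 1/3`:
`M_{XZ}(μ) = (1/3)μ + (1/3)σₓμσₓ + (1/3)σ_zμσ_z`. -/
def twoPauli (μ : Matrix (Fin 2) (Fin 2) ℂ) : Matrix (Fin 2) (Fin 2) ℂ :=
  (1 / 3 : ℂ) • μ + (1 / 3 : ℂ) • (pauliX * μ * pauliX) + (1 / 3 : ℂ) • (pauliZ * μ * pauliZ)

end QI

namespace QI

lemma trace_eq_sum_eigs {n : Type*} [Fintype n] [DecidableEq n]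
    {A : Matrix n n ℂ} (hA : A.IsHermitian) :
    A.trace = ∑ i, (hA.eigenvalues i : ℂ) := by
  nth_rewrite 1 [hA.spectral_theorem]
  rw [Unitary.conjStarAlgAut_apply, Matrix.trace_mul_cycle,
    Matrix.mem_unitaryGroup_iff'.mp (hA.eigenvectorUnitary).2, Matrix.one_mul,
    Matrix.trace_diagonal]
  simp

lemma pauliX_herm : pauliX.IsHermitian := by
  ext i j
  fin_cases i <;> fin_cases j <;> simp [pauliX, Matrix.conjTranspose_apply]

lemma pauliZ_herm : pauliZ.IsHermitian := by
  ext i j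
  fin_cases i <;> fin_cases j <;> simp [pauliZ, Matrix.conjTranspose_apply]

lemma pureState_herm (ψ : Fin 2 → ℂ) : (pureState ψ).IsHermitian := by
  ext i j
  simp [pureState, Matrix.conjTranspose_apply, mul_comm]

lemma twoPauli_herm {μ : Matrix (Fin 2) (Fin 2) ℂ} (hμ : μ.IsHermitian) :
    (twoPauli μ).IsHermitian := by
  have hX := pauliX_herm
  have hZ := pauliZ_herm
  unfold Matrix.IsHermitian at *
  unfold twoPauli
  simp only [Matrix.conjTranspose_add, Matrix.conjTranspose_smul, Matrix.conjTranspose_mul,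
    hX, hZ, hμ]
  rw [show star (1/3 : ℂ) = 1/3 by norm_num]
  rw [Matrix.mul_assoc, Matrix.mul_assoc]

lemma unit_cc {ψ : Fin 2 → ℂ} (h : IsUnitVec ψ) :
    ψ 0 * star (ψ 0) + ψ 1 * star (ψ 1) = 1 := by
  have h' : Complex.normSq (ψ 0) + Complex.normSq (ψ 1) = 1 := by
    simpa [IsUnitVec, Fin.sum_univ_two] using h
  have e0 : ψ 0 * star (ψ 0) = (Complex.normSq (ψ 0) : ℂ) := Complex.mul_conj _
  have e1 : ψ 1 * star (ψ 1) = (Complex.normSq (ψ 1) : ℂ) := Complex.mul_conj _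
  rw [e0, e1]
  exact_mod_cast congrArg (Complex.ofReal) h'

lemma twoPauli_trace {ψ : Fin 2 → ℂ} (h : IsUnitVec ψ) :
    (twoPauli (pureState ψ)).trace = 1 := by
  have hc := unit_cc h
  simp only [twoPauli, pureState, pauliX, pauliZ, Matrix.trace_fin_two, Matrix.add_apply,
    Matrix.smul_apply, Matrix.mul_apply, Fin.sum_univ_two, Matrix.of_apply,
    Matrix.cons_val', Matrix.cons_val_zero, Matrix.cons_val_one, Matrix.head_cons,
    Matrix.empty_val', Matrix.cons_val_fin_one, Matrix.head_fin_const, smul_eq_mul]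
  linear_combination hc

lemma twoPauli_det {ψ : Fin 2 → ℂ} (h : IsUnitVec ψ) :
    (twoPauli (pureState ψ)).det = 2 / 9 := by
  have hc := unit_cc h
  simp only [twoPauli, pureState, pauliX, pauliZ, Matrix.det_fin_two, Matrix.add_apply,
    Matrix.smul_apply, Matrix.mul_apply, Fin.sum_univ_two, Matrix.of_apply,
    Matrix.cons_val', Matrix.cons_val_zero, Matrix.cons_val_one, Matrix.head_cons,
    Matrix.empty_val', Matrix.cons_val_fin_one, Matrix.head_fin_const, smul_eq_mul]
  linear_combination (2/9 * (ψ 0 * star (ψ 0) + ψ 1 * star (ψ 1)) + 2/9) * hc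

lemma eigs_twoPauli {ψ : Fin 2 → ℂ} (h : IsUnitVec ψ)
    (hH : (twoPauli (pureState ψ)).IsHermitian) :
    (hH.eigenvalues 0 = 2/3 ∧ hH.eigenvalues 1 = 1/3) ∨
    (hH.eigenvalues 0 = 1/3 ∧ hH.eigenvalues 1 = 2/3) := by
  set e := hH.eigenvalues with he
  have hsumC : ((e 0 : ℂ) + (e 1 : ℂ)) = 1 := by
    have h1 := trace_eq_sum_eigs hH
    rw [twoPauli_trace h, Fin.sum_univ_two] at h1
    exact h1.symm
  have hprodC : ((e 0 : ℂ) * (e 1 : ℂ)) = 2 / 9 := by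
    have h1 := hH.det_eq_prod_eigenvalues
    rw [twoPauli_det h, Fin.prod_univ_two] at h1
    exact h1.symm
  have hsum : e 0 + e 1 = 1 := by exact_mod_cast hsumC
  have hprod : e 0 * e 1 = 2 / 9 := by
    rw [show (2/9 : ℂ) = ((2/9 : ℝ) : ℂ) by norm_num] at hprodC
    exact_mod_cast hprodC
  have hroot : (e 0 - 2/3) * (e 0 - 1/3) = 0 := by
    linear_combination e 0 * hsum - hprod
  rcases mul_eq_zero.mp hroot with h0 | h0
  · left; constructor <;> [skip; skip] <;> linarith
  · right; constructor <;> linarith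

lemma spec_twoPauli {ψ : Fin 2 → ℂ} (h : IsUnitVec ψ) :
    spec (twoPauli (pureState ψ)) = (2 / 3 : ℝ) ::ₘ {(1 / 3 : ℝ)} := by
  have hH := twoPauli_herm (pureState_herm ψ)
  rw [spec, dif_pos hH]
  have huniv : (Finset.univ : Finset (Fin 2)).val = {0, 1} := rfl
  rw [huniv]
  rcases eigs_twoPauli h hH with ⟨h0, h1⟩ | ⟨h0, h1⟩
  · simp [h0, h1]
  · simp only [Multiset.insert_eq_cons, Multiset.map_cons, Multiset.map_singleton, h0, h1]
    exact (Multiset.cons_swap _ _ _)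

lemma vnEntropy_twoPauli {ψ : Fin 2 → ℂ} (h : IsUnitVec ψ) :
    vnEntropy (twoPauli (pureState ψ)) = binEnt (1 / 3) := by
  have hH := twoPauli_herm (pureState_herm ψ)
  rw [vnEntropy, dif_pos hH, Fin.sum_univ_two]
  have hbin : binEnt (1/3) = -((2/3 : ℝ) * Real.log (2/3) + (1/3 : ℝ) * Real.log (1/3)) := by
    rw [binEnt]; norm_num; ring
  rcases eigs_twoPauli h hH with ⟨h0, h1⟩ | ⟨h0, h1⟩ <;> rw [h0, h1, hbin] <;> ring

end QI

/-- the two-Pauli channel with `t = 1/3` maps every pure qubit state to a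
state with eigenvalues `(2/3, 1/3)`; hence its minimum output entropy is `h(1/3)`. -/
theorem twoPauli_output_spectrum_and_smin :
    (∀ ψ : Fin 2 → ℂ, QI.IsUnitVec ψ →
      QI.spec (QI.twoPauli (QI.pureState ψ)) = (2 / 3 : ℝ) ::ₘ {(1 / 3 : ℝ)}) ∧
    QI.Smin QI.twoPauli = QI.binEnt (1 / 3) := by
  constructor
  · exact fun ψ h => QI.spec_twoPauli h
  · have hset : {x | ∃ ψ : Fin 2 → ℂ, QI.IsUnitVec ψ ∧
        x = QI.vnEntropy (QI.twoPauli (QI.pureState ψ))} = {QI.binEnt (1 / 3)} := by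
      ext x
      constructor
      · rintro ⟨ψ, hψ, rfl⟩
        exact QI.vnEntropy_twoPauli hψ
      · rintro rfl
        refine ⟨![1, 0], ?_, (QI.vnEntropy_twoPauli ?_).symm⟩ <;>
          simp [QI.IsUnitVec, Fin.sum_univ_two]
    rw [QI.Smin, hset, csInf_singleton]
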